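/- For every integer n ≥ 1, ∑_{i=1}^{n+1} C(n+1,i) (−1)^i log i = ∫_{0}^{1} [ 1/x − n!/(x(x+1)(x+2)⋯(x+n)) ] dx. -/

import Mathlib

open Finset MeasureTheory

-- Partial fraction expansion
lemma pf (n : ℕ) : ∀ x : ℝ, 0 < x →
    ∑ i ∈ range (n+1), (-1:ℝ)^i * (n.choose i : ℝ) / (x + i)
      = (n.factorial : ℝ) / ∏ j ∈ range (n+1), (x + (j:ℝ)) := by
  induction n with
  | zero => intro x hx; simp
  | succ n ih =>
    intro x hx
    have hx1 : (0:ℝ) < x + 1 := by linarith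
    have hPa : (0:ℝ) < ∏ j ∈ range (n+1), (x + (j:ℝ)) :=
      Finset.prod_pos (fun j _ => by positivity)
    have hPb : (0:ℝ) < ∏ j ∈ range (n+1), ((x+1) + (j:ℝ)) :=
      Finset.prod_pos (fun j _ => by positivity)
    have hsum : ∑ i ∈ range (n+2), (-1:ℝ)^i * ((n+1).choose i : ℝ) / (x + i)
        = (∑ i ∈ range (n+1), (-1:ℝ)^i * (n.choose i : ℝ) / (x + i))
          - ∑ i ∈ range (n+1), (-1:ℝ)^i * (n.choose i : ℝ) / ((x+1) + i) := by
      rw [Finset.sum_range_succ' (fun i => (-1:ℝ)^i * ((n+1).choose i : ℝ) / (x + i)) (n+1)]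
      have hsplit : ∀ i ∈ range (n+1),
          (-1:ℝ)^(i+1) * ((n+1).choose (i+1) : ℝ) / (x + (i+1:ℕ))
            = (-1:ℝ)^(i+1) * (n.choose (i+1) : ℝ) / (x + ((i+1:ℕ):ℝ))
              - (-1:ℝ)^i * (n.choose i : ℝ) / ((x+1) + i) := by
        intro i _
        rw [Nat.choose_succ_succ]
        push_cast
        have h1 : x + ((i:ℝ)+1) ≠ 0 := by positivity
        field_simp
        ring
      rw [Finset.sum_congr rfl hsplit, Finset.sum_sub_distrib]
      have h2 : ∑ i ∈ range (n+1), (-1:ℝ)^(i+1) * (n.choose (i+1) : ℝ) / (x + ((i+1:ℕ):ℝ))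
          + (-1:ℝ)^0 * ((n+1).choose 0 : ℝ) / (x + (0:ℕ))
          = ∑ i ∈ range (n+2), (-1:ℝ)^i * (n.choose i : ℝ) / (x + i) := by
        rw [Finset.sum_range_succ' (fun i => (-1:ℝ)^i * (n.choose i : ℝ) / (x + i)) (n+1)]
        norm_num
      have h3 : ∑ i ∈ range (n+2), (-1:ℝ)^i * (n.choose i : ℝ) / (x + i)
          = ∑ i ∈ range (n+1), (-1:ℝ)^i * (n.choose i : ℝ) / (x + i) := by
        rw [Finset.sum_range_succ, Nat.choose_succ_self]
        norm_num
      rw [sub_add_eq_add_sub, h2, h3]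
    rw [hsum, ih x hx, ih (x+1) hx1]
    have e1 : ∏ j ∈ range (n+2), (x + (j:ℝ)) = (∏ j ∈ range (n+1), (x + (j:ℝ))) * (x + ((n+1:ℕ):ℝ)) :=
      Finset.prod_range_succ _ _
    have e2 : ∏ j ∈ range (n+2), (x + (j:ℝ)) = (∏ j ∈ range (n+1), ((x+1) + (j:ℝ))) * x := by
      rw [Finset.prod_range_succ' (fun j => (x + (j:ℝ))) (n+1)]
      push_cast
      congr 1
      · exact Finset.prod_congr rfl (fun j _ => by ring)
      · norm_num
    set a := ∏ j ∈ range (n+1), (x + (j:ℝ)) with ha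
    set b := ∏ j ∈ range (n+1), ((x+1) + (j:ℝ)) with hb
    have hrel : a * (x + ((n+1:ℕ):ℝ)) = b * x := by rw [← e1, ← e2]
    rw [e1]
    have hfac : ((n+1).factorial : ℝ) = ((n:ℝ)+1) * (n.factorial : ℝ) := by
      rw [Nat.factorial_succ]; push_cast; ring
    rw [hfac]
    push_cast at hrel ⊢
    field_simp
    linear_combination (-1:ℝ) * hrel

lemma integ_one_div_add (c : ℝ) (hc : 1 ≤ c) :
    IntegrableOn (fun x : ℝ => 1/(x + c)) (Set.Ioc (0:ℝ) 1) := by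
  have hco : ContinuousOn (fun x : ℝ => 1/(x + c)) (Set.Icc 0 1) := by
    apply ContinuousOn.div continuousOn_const (by fun_prop)
    intro x hx
    have := hx.1
    nlinarith
  exact hco.integrableOn_Icc.mono_set Set.Ioc_subset_Icc_self

lemma int_one_div_add (c : ℝ) (hc : 1 ≤ c) :
    ∫ x in Set.Ioc (0:ℝ) 1, 1/(x + c) = Real.log (c+1) - Real.log c := by
  rw [← intervalIntegral.integral_of_le zero_le_one]
  rw [intervalIntegral.integral_comp_add_right (fun y => 1/y) c]
  rw [integral_one_div (by
    intro h
    rw [Set.mem_uIcc] at h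
    rcases h with ⟨h1, _⟩ | ⟨_, h2⟩ <;> linarith)]
  rw [Real.log_div (by linarith) (by linarith), zero_add, add_comm]

lemma alg (n : ℕ) :
    ∑ i ∈ range (n+1), ((n+1).choose (1+i) : ℝ) * (-1:ℝ)^(1+i) * Real.log ((1+i : ℕ) : ℝ)
      = ∑ i ∈ range n, (-1:ℝ)^i * (n.choose (i+1) : ℝ) * (Real.log ((i:ℝ)+1+1) - Real.log ((i:ℝ)+1)) := by
  have hsplit : ∀ i ∈ range (n+1),
      ((n+1).choose (1+i) : ℝ) * (-1:ℝ)^(1+i) * Real.log ((1+i : ℕ) : ℝ)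
        = (n.choose i : ℝ) * (-1:ℝ)^(1+i) * Real.log ((1+i : ℕ) : ℝ)
          + (n.choose (i+1) : ℝ) * (-1:ℝ)^(1+i) * Real.log ((1+i : ℕ) : ℝ) := by
    intro i _
    rw [show 1 + i = i + 1 from add_comm 1 i, Nat.choose_succ_succ]
    push_cast
    ring
  rw [Finset.sum_congr rfl hsplit, Finset.sum_add_distrib]
  rw [Finset.sum_range_succ' (fun i => (n.choose i : ℝ) * (-1:ℝ)^(1+i) * Real.log ((1+i : ℕ) : ℝ)) n]
  rw [Finset.sum_range_succ (fun i => (n.choose (i+1) : ℝ) * (-1:ℝ)^(1+i) * Real.log ((1+i : ℕ) : ℝ)) n]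
  rw [Nat.choose_succ_self]
  norm_num
  rw [← Finset.sum_add_distrib]
  apply Finset.sum_congr rfl
  intro i _
  ring_nf

/-- For every integer `n ≥ 1`,
`∑_{i=1}^{n+1} C(n+1,i)(−1)^i log i = ∫_{0}^{1} [1/x − n!/(x(x+1)⋯(x+n))] dx`. -/
theorem alternating_binomial_log_eq_integral
    (n : ℕ) (hn : 1 ≤ n) :
    (∑ i ∈ Finset.Icc 1 (n + 1), ((n + 1).choose i : ℝ) * (-1 : ℝ) ^ i * Real.log i)
      = ∫ x in Set.Ioc (0 : ℝ) 1,
          (1 / x - (n.factorial : ℝ) / ∏ j ∈ Finset.range (n + 1), (x + (j : ℝ))) := by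
  have key : Set.EqOn
      (fun x : ℝ => 1 / x - (n.factorial : ℝ) / ∏ j ∈ Finset.range (n + 1), (x + (j : ℝ)))
      (fun x : ℝ => ∑ i ∈ range n, (-1:ℝ)^i * (n.choose (i+1) : ℝ) * (1/(x + ((i:ℝ)+1))))
      (Set.Ioc (0:ℝ) 1) := by
    intro x hx
    have hx0 : 0 < x := hx.1
    simp only
    rw [← pf n x hx0,
      Finset.sum_range_succ' (fun i => (-1:ℝ)^i * (n.choose i : ℝ) / (x + i)) n]
    have hTU : ∑ i ∈ range n,
        ((-1:ℝ)^(i+1) * (n.choose (i+1) : ℝ) / (x + ((i+1:ℕ):ℝ))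
          + (-1:ℝ)^i * (n.choose (i+1) : ℝ) * (1/(x + ((i:ℝ)+1)))) = 0 :=
      Finset.sum_eq_zero (by intro i _; push_cast; ring)
    rw [Finset.sum_add_distrib] at hTU
    have h0 : (-1:ℝ)^0 * ((n.choose 0 : ℕ) : ℝ) / (x + ((0:ℕ):ℝ)) = 1/x := by simp
    rw [h0]
    linarith
  rw [setIntegral_congr_fun measurableSet_Ioc key]
  rw [integral_finset_sum (range n)
    (f := fun i => fun x : ℝ => (-1:ℝ)^i * (n.choose (i+1) : ℝ) * (1/(x + ((i:ℝ)+1))))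
    (fun i _ => (integ_one_div_add ((i:ℝ)+1) (by linarith [Nat.cast_nonneg (α := ℝ) i])).const_mul _)]
  have hint : ∀ i ∈ range n,
      ∫ x in Set.Ioc (0:ℝ) 1, (-1:ℝ)^i * (n.choose (i+1) : ℝ) * (1/(x + ((i:ℝ)+1)))
        = (-1:ℝ)^i * (n.choose (i+1) : ℝ) * (Real.log ((i:ℝ)+1+1) - Real.log ((i:ℝ)+1)) := by
    intro i _
    rw [integral_const_mul, int_one_div_add ((i:ℝ)+1) (by linarith [Nat.cast_nonneg (α := ℝ) i])]
  rw [Finset.sum_congr rfl hint]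
  rw [show Finset.Icc 1 (n+1) = Finset.Ico 1 (n+2) from (Finset.Ico_add_one_right_eq_Icc ..).symm]
  rw [Finset.sum_Ico_eq_sum_range]
  exact alg n
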